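/- Let T be a finite nonempty tree (a connected acyclic graph) and let H be a finite nonempty graph. Then Γ(T[H]) = Γ(T) · Γ(H). -/

import Mathlib

open SimpleGraph

/-- A greedy `k`-coloring of `G`: a partition of the vertex set into nonempty stable sets
`S 0, …, S (k-1)` such that for all `j < i`, every vertex of `S i` has a neighbor in `S j`. -/
def IsGreedyColoring {V : Type*} (G : SimpleGraph V) (k : ℕ) (S : Fin k → Set V) : Prop :=
  (∀ v : V, ∃! i, v ∈ S i) ∧
  (∀ i, (S i).Nonempty) ∧
  (∀ i, ∀ v ∈ S i, ∀ w ∈ S i, ¬ G.Adj v w) ∧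
  (∀ i j : Fin k, j < i → ∀ v ∈ S i, ∃ w ∈ S j, G.Adj v w)

/-- The Grundy number `Γ(G)`: the largest `k` such that `G` has a greedy `k`-coloring. -/
noncomputable def grundy {V : Type*} [Fintype V] (G : SimpleGraph V) : ℕ :=
  sSup {k | ∃ S : Fin k → Set V, IsGreedyColoring G k S}

/-- Lexicographic product `G[H]`: `(a,x)` adjacent to `(b,y)` iff `ab ∈ E(G)`,
or `a = b` and `xy ∈ E(H)`. -/
def lexProd {α β : Type*} (G : SimpleGraph α) (H : SimpleGraph β) :
    SimpleGraph (α × β) where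
  Adj x y := G.Adj x.1 y.1 ∨ (x.1 = y.1 ∧ H.Adj x.2 y.2)
  symm := ⟨fun _ _ h => by
    rcases h with h | ⟨h1, h2⟩
    · exact Or.inl (G.adj_symm h)
    · exact Or.inr ⟨h1.symm, H.adj_symm h2⟩⟩
  loopless := ⟨fun _ h => by
    rcases h with h | ⟨-, h2⟩
    · exact G.irrefl h
    · exact H.irrefl h2⟩


section Basics

variable {V : Type*} [Fintype V] (G : SimpleGraph V)

/-- Extend a partial greedy structure to a full greedy coloring. -/
theorem exists_greedy_ge [Nonempty V] (t : ℕ) (C : Fin t → Set V)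
    (hne : ∀ i, (C i).Nonempty)
    (hst : ∀ i, ∀ v ∈ C i, ∀ w ∈ C i, ¬ G.Adj v w)
    (hdisj : ∀ i j, i ≠ j → Disjoint (C i) (C j))
    (hwit : ∀ i j : Fin t, j < i → ∀ v ∈ C i, ∃ w ∈ C j, G.Adj v w) :
    ∃ m, t ≤ m ∧ ∃ Sc : Fin m → Set V, IsGreedyColoring G m Sc := by
  classical
  set P : (V → ℕ) → Prop := fun f =>
    (∀ v w, G.Adj v w → f v ≠ f w) ∧ (∀ (i : Fin t) v, v ∈ C i → f v = i) with hP
  -- an initial coloring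
  obtain ⟨e⟩ := Fintype.truncEquivFin V
  have hPinit : ∃ f, P f := by
    refine ⟨fun v => if h : ∃ i, v ∈ C i then (h.choose : ℕ) else t + e v, ?_, ?_⟩
    · intro v w hadj
      have hvw : v ≠ w := G.ne_of_adj hadj
      by_cases hv : ∃ i, v ∈ C i <;> by_cases hw : ∃ i, w ∈ C i <;>
        simp only [hv, hw, dif_pos, dif_neg, not_false_iff]
      · intro h
        have : hv.choose = hw.choose := Fin.ext h
        exact hst hv.choose v hv.choose_spec w (this ▸ hw.choose_spec) hadj
      · exact fun h => absurd h (by have := hv.choose.isLt; omega)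
      · exact fun h => absurd h (by have := hw.choose.isLt; omega)
      · intro h
        exact hvw (e.injective (by omega))
    · intro i v hv
      have hex : ∃ i, v ∈ C i := ⟨i, hv⟩
      simp only [hex, dif_pos]
      congr 1
      by_contra hne'
      exact (hdisj _ _ hne').ne_of_mem hex.choose_spec hv rfl
  -- minimize the sum
  set Sums : Set ℕ := {s | ∃ f, P f ∧ ∑ v, f v = s} with hSums
  have hSne : Sums.Nonempty := ⟨_, hPinit.choose, hPinit.choose_spec, rfl⟩
  obtain ⟨f, hPf, hsum⟩ := Nat.sInf_mem hSne
  -- key property: witnesses below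
  have key : ∀ v, ∀ j < f v, ∃ w, G.Adj v w ∧ f w = j := by
    intro v j hj
    by_cases hvC : ∃ i, v ∈ C i
    · obtain ⟨i, hvi⟩ := hvC
      have hfv : f v = i := hPf.2 i v hvi
      have hjt : j < t := lt_of_lt_of_le (by omega) i.isLt.le
      obtain ⟨w, hw, hadj⟩ := hwit i ⟨j, hjt⟩ (by simp [Fin.lt_def]; omega) v hvi
      exact ⟨w, hadj, by simpa using hPf.2 _ w hw⟩
    · by_contra hno
      push_neg at hno
      set g : V → ℕ := Function.update f v j with hg
      have hPg : P g := by
        constructor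
        · intro u u' hadj
          rcases eq_or_ne u v with rfl | hu
          · have : u' ≠ u := (G.ne_of_adj hadj).symm
            rw [hg, Function.update_self, Function.update_of_ne this]
            intro h
            exact hno u' hadj h.symm
          · rw [hg, Function.update_of_ne hu]
            rcases eq_or_ne u' v with rfl | hu'
            · rw [Function.update_self]
              intro h
              exact hno u (G.adj_symm hadj) h
            · rw [Function.update_of_ne hu']
              exact hPf.1 u u' hadj
        · intro i w hw
          have : w ≠ v := fun h => hvC ⟨i, h ▸ hw⟩
          rw [hg, Function.update_of_ne this]
          exact hPf.2 i w hw
      have hlt : ∑ u, g u < ∑ u, f u := by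
        apply Finset.sum_lt_sum
        · intro u _
          rcases eq_or_ne u v with rfl | hu
          · rw [hg, Function.update_self]; omega
          · rw [hg, Function.update_of_ne hu]
        · exact ⟨v, Finset.mem_univ v, by rw [hg, Function.update_self]; omega⟩
      have : ∑ u, g u ∈ Sums := ⟨g, hPg, rfl⟩
      have := Nat.sInf_le this
      omega
  -- build the coloring from f
  obtain ⟨vmax, -, hvmax⟩ := Finset.exists_mem_eq_sup Finset.univ
    (Finset.univ_nonempty) f
  set m : ℕ := Finset.univ.sup f + 1 with hm
  have hflt : ∀ v, f v < m := fun v => by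
    have := Finset.le_sup (f := f) (Finset.mem_univ v); omega
  have hattain : ∀ j < m, ∃ v, f v = j := by
    intro j hjm
    rcases eq_or_lt_of_le (Nat.lt_succ_iff.mp hjm) with h | h
    · exact ⟨vmax, by omega⟩
    · obtain ⟨w, -, hw⟩ := key vmax j (by omega)
      exact ⟨w, hw⟩
  refine ⟨m, ?_, fun i => {v | f v = i}, ?_, ?_, ?_, ?_⟩
  · rcases Nat.eq_zero_or_pos t with rfl | ht
    · omega
    · obtain ⟨v, hv⟩ := hne ⟨t - 1, by omega⟩
      have h1 : f v = t - 1 := hPf.2 _ v hv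
      have h2 := hflt v
      omega
  · intro v
    exact ⟨⟨f v, hflt v⟩, rfl, fun i hi => Fin.ext hi.symm⟩
  · intro i
    obtain ⟨v, hv⟩ := hattain i i.isLt
    exact ⟨v, hv⟩
  · intro i v hv w hw hadj
    exact hPf.1 v w hadj (by rw [hv, hw])
  · intro i j hij v hv
    obtain ⟨w, hadj, hw⟩ := key v j (by rw [hv]; exact hij)
    exact ⟨w, hw, hadj⟩

theorem greedySet_bddAbove : BddAbove {k | ∃ S : Fin k → Set V, IsGreedyColoring G k S} := by
  refine ⟨Fintype.card V, fun k hk => ?_⟩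
  obtain ⟨S, h1, h2, -, -⟩ := hk
  have hinj : Function.Injective (fun i : Fin k => (h2 i).choose) := by
    intro i j hij
    have hij' : (h2 i).choose = (h2 j).choose := hij
    have hi := (h2 i).choose_spec
    have hj := (h2 j).choose_spec
    rw [hij'] at hi
    obtain ⟨i', -, huniq⟩ := h1 ((h2 j).choose)
    rw [huniq i hi, huniq j hj]
  simpa using Fintype.card_le_of_injective _ hinj

theorem greedySet_nonempty [Nonempty V] :
    {k | ∃ S : Fin k → Set V, IsGreedyColoring G k S}.Nonempty := by
  obtain ⟨m, -, Sc, hSc⟩ := exists_greedy_ge G 0 Fin.elim0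
    (fun i => i.elim0) (fun i => i.elim0) (fun i => i.elim0) (fun i => i.elim0)
  exact ⟨m, Sc, hSc⟩

theorem grundy_mem [Nonempty V] :
    grundy G ∈ {k | ∃ S : Fin k → Set V, IsGreedyColoring G k S} :=
  Nat.sSup_mem (greedySet_nonempty G) (greedySet_bddAbove G)

theorem le_grundy_of_mem {k : ℕ} {S : Fin k → Set V} (h : IsGreedyColoring G k S) :
    k ≤ grundy G :=
  le_csSup (greedySet_bddAbove G) ⟨S, h⟩

theorem grundy_le [Nonempty V] {n : ℕ}
    (h : ∀ k, ∀ S : Fin k → Set V, IsGreedyColoring G k S → k ≤ n) : grundy G ≤ n :=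
  csSup_le (greedySet_nonempty G) (fun k ⟨S, hS⟩ => h k S hS)

theorem grundy_pos [Nonempty V] : 0 < grundy G := by
  obtain ⟨S, h1, -, -, -⟩ := grundy_mem G
  obtain ⟨i, -, -⟩ := h1 (Classical.arbitrary V)
  have := i.isLt
  omega

theorem partial_greedy_le_grundy [Nonempty V] (t : ℕ) (C : Fin t → Set V)
    (hne : ∀ i, (C i).Nonempty)
    (hst : ∀ i, ∀ v ∈ C i, ∀ w ∈ C i, ¬ G.Adj v w)
    (hdisj : ∀ i j, i ≠ j → Disjoint (C i) (C j))
    (hwit : ∀ i j : Fin t, j < i → ∀ v ∈ C i, ∃ w ∈ C j, G.Adj v w) :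
    t ≤ grundy G := by
  obtain ⟨m, htm, Sc, hSc⟩ := exists_greedy_ge G t C hne hst hdisj hwit
  exact htm.trans (le_grundy_of_mem G hSc)

end Basics


section Geometry

variable {α : Type*} [DecidableEq α] {T : SimpleGraph α} (hT : T.IsTree)

lemma walk_concat_isPath {u v w : α} {p : T.Walk u v} (hp : p.IsPath)
    (h : T.Adj v w) (hw : w ∉ p.support) : (p.concat h).IsPath := by
  rw [← Walk.isPath_reverse_iff, Walk.reverse_concat]
  rw [Walk.cons_isPath_iff]
  exact ⟨hp.reverse, by simpa [Walk.support_reverse] using hw⟩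

include hT

lemma isPath_length_eq_dist {v w : α} (p : T.Walk v w) (hp : p.IsPath) :
    p.length = T.dist v w := by
  refine le_antisymm ?_ (SimpleGraph.dist_le p)
  obtain ⟨q, hq⟩ := hT.isConnected.exists_walk_length_eq_dist v w
  have huniq := (isAcyclic_iff_path_unique.mp hT.IsAcyclic) (⟨p, hp⟩ : T.Path v w)
    ⟨q.bypass, q.bypass_isPath⟩
  have : p = q.bypass := congrArg Subtype.val huniq
  rw [this, ← hq]
  exact Walk.length_bypass_le q

lemma exists_isPath_dist (v w : α) :
    ∃ p : T.Walk v w, p.IsPath ∧ p.length = T.dist v w := by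
  obtain ⟨q, hq⟩ := hT.isConnected.exists_walk_length_eq_dist v w
  exact ⟨q.bypass, q.bypass_isPath, isPath_length_eq_dist hT _ q.bypass_isPath⟩

lemma tree_dichotomy {p a : α} (hpa : T.Adj p a) (v : α) :
    T.dist v p + 1 = T.dist v a ∨ T.dist v a + 1 = T.dist v p := by
  obtain ⟨P, hP, hPlen⟩ := exists_isPath_dist hT v a
  by_cases hp : p ∈ P.support
  · left
    have htake := hP.takeUntil hp
    have hdrop := hP.dropUntil hp
    have hE : (Walk.cons hpa Walk.nil : T.Walk p a).IsPath := by
      simp [Walk.cons_isPath_iff, hpa.ne]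
    have huniq := (isAcyclic_iff_path_unique.mp hT.IsAcyclic)
      (⟨P.dropUntil p hp, hdrop⟩ : T.Path p a) ⟨Walk.cons hpa Walk.nil, hE⟩
    have hdl : (P.dropUntil p hp).length = 1 := by
      have := congrArg (fun q : T.Path p a => q.1.length) huniq
      simpa using this
    have hspec := Walk.take_spec P hp
    have hlen : (P.takeUntil p hp).length + (P.dropUntil p hp).length = P.length := by
      rw [← Walk.length_append, hspec]
    have htl := isPath_length_eq_dist hT _ htake
    omega
  · right
    have hQ : (P.concat hpa.symm).IsPath := walk_concat_isPath hP hpa.symm hp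
    have := isPath_length_eq_dist hT _ hQ
    rw [Walk.length_concat] at this
    omega

lemma tree_unique_down {b₁ b₂ a v : α} (hb1 : T.Adj b₁ a) (hb2 : T.Adj b₂ a)
    (h1 : T.dist v b₁ + 1 = T.dist v a) (h2 : T.dist v b₂ + 1 = T.dist v a) :
    b₁ = b₂ := by
  have key : ∀ b (hb : T.Adj b a), T.dist v b + 1 = T.dist v a →
      ∃ (Q : T.Walk v b) (hQ : Q.IsPath) (ha : a ∉ Q.support), True := by
    intro b hb h
    obtain ⟨Q, hQ, hQlen⟩ := exists_isPath_dist hT v b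
    refine ⟨Q, hQ, fun ha => ?_, trivial⟩
    have h1' := SimpleGraph.dist_le (Q.takeUntil a ha)
    have h2' := Walk.length_takeUntil_le Q ha
    omega
  obtain ⟨Q₁, hQ₁, ha₁, -⟩ := key b₁ hb1 h1
  obtain ⟨Q₂, hQ₂, ha₂, -⟩ := key b₂ hb2 h2
  have hP₁ : (Q₁.concat hb1).IsPath := walk_concat_isPath hQ₁ hb1 ha₁
  have hP₂ : (Q₂.concat hb2).IsPath := walk_concat_isPath hQ₂ hb2 ha₂
  have huniq := (isAcyclic_iff_path_unique.mp hT.IsAcyclic)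
    (⟨Q₁.concat hb1, hP₁⟩ : T.Path v a) ⟨Q₂.concat hb2, hP₂⟩
  obtain ⟨hv, -⟩ := Walk.concat_inj (congrArg Subtype.val huniq)
  exact hv

lemma tree_exists_adj_dist_pred {v a : α} (h : 1 ≤ T.dist v a) :
    ∃ u, T.Adj v u ∧ T.dist u a + 1 = T.dist v a := by
  obtain ⟨W, hWlen⟩ := hT.isConnected.exists_walk_length_eq_dist v a
  cases W with
  | nil => rw [SimpleGraph.dist_self] at h; omega
  | cons h' W' =>
    rename_i u
    have h1 : T.dist u a ≤ W'.length := SimpleGraph.dist_le W'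
    have h2 : T.dist v a ≤ T.dist v u + T.dist u a := hT.isConnected.dist_triangle
    have h3 : T.dist v u ≤ 1 := by
      simpa using SimpleGraph.dist_le (Walk.cons h' Walk.nil)
    simp only [Walk.length_cons] at hWlen
    exact ⟨u, h', by omega⟩

lemma dist_adj_le {v a b : α} (h : T.Adj a b) :
    T.dist v b ≤ T.dist v a + 1 := by
  have h2 : T.dist v b ≤ T.dist v a + T.dist a b := hT.isConnected.dist_triangle
  have h3 : T.dist a b = 1 := SimpleGraph.dist_eq_one_iff_adj.mpr h
  omega

lemma adj_dist_succ {x y : α} (h : T.Adj x y) (z : α) :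
    T.dist x z ≤ T.dist y z + 1 := by
  have h2 : T.dist x z ≤ T.dist x y + T.dist y z := hT.isConnected.dist_triangle
  have h3 : T.dist x y = 1 := SimpleGraph.dist_eq_one_iff_adj.mpr h
  omega

lemma side_closed {a b v w : α} (hab : T.Adj a b)
    (hv : T.dist v b < T.dist v a) (hadj : T.Adj v w) (hw : w ≠ a) :
    T.dist w b < T.dist w a := by
  have hvd : T.dist v b + 1 = T.dist v a := by
    rcases tree_dichotomy hT hab v with h | h
    · omega
    · omega
  by_contra hcon
  have hwd : T.dist w a + 1 = T.dist w b := by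
    rcases tree_dichotomy hT hab w with h | h
    · omega
    · omega
  have hb1 : T.dist w b ≤ T.dist v b + 1 := adj_dist_succ hT hadj.symm b
  have hb2 : T.dist v a ≤ T.dist w a + 1 := adj_dist_succ hT hadj a
  have heq1 : T.dist w a = T.dist v b := by omega
  rcases Nat.eq_zero_or_pos (T.dist v b) with h0 | hpos
  · have hvb : v = b := (hT.isConnected.dist_eq_zero_iff).mp h0
    have hwa : w = a := (hT.isConnected.dist_eq_zero_iff).mp (by omega)
    exact hw hwa
  · obtain ⟨u, hvu, hu⟩ := tree_exists_adj_dist_pred hT hpos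
    have hua1 : T.dist u a ≤ T.dist u b + 1 := dist_adj_le hT hab.symm
    have hua2 : T.dist v a ≤ T.dist u a + 1 := adj_dist_succ hT hvu a
    have huad : T.dist u a + 1 = T.dist v a := by omega
    have huw : u = w := by
      refine tree_unique_down (v := a) hT hvu.symm hadj.symm ?_ ?_
      · rw [SimpleGraph.dist_comm, SimpleGraph.dist_comm (u := a)]; omega
      · rw [SimpleGraph.dist_comm, SimpleGraph.dist_comm (u := a)]; omega
    rw [huw] at hu
    omega

end Geometry


section TSideL
variable {α : Type*} [DecidableEq α] {T : SimpleGraph α}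

def TSide (T : SimpleGraph α) (a b : α) : Set α := {v | T.dist v b < T.dist v a}

lemma mem_TSide_self {a b : α} (hT : T.IsTree) (hab : T.Adj a b) : b ∈ TSide T a b := by
  have h1 : T.dist b b = 0 := SimpleGraph.dist_self
  have h2 : T.dist b a = 1 := SimpleGraph.dist_eq_one_iff_adj.mpr hab.symm
  simp only [TSide, Set.mem_setOf_eq]
  omega

lemma not_mem_TSide {a b : α} (hT : T.IsTree) (hab : T.Adj a b) : a ∉ TSide T a b := by
  have h1 : T.dist a a = 0 := SimpleGraph.dist_self
  have h2 : T.dist a b = 1 := SimpleGraph.dist_eq_one_iff_adj.mpr hab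
  simp only [TSide, Set.mem_setOf_eq]
  omega

lemma TSide_subset {a b c : α} (hT : T.IsTree) (hab : T.Adj a b) (hbc : T.Adj b c)
    (hca : c ≠ a) : TSide T b c ⊆ TSide T a b := by
  intro v hv
  simp only [TSide, Set.mem_setOf_eq] at hv ⊢
  have h1 : T.dist v c + 1 = T.dist v b := by
    rcases tree_dichotomy hT hbc v with h | h <;> omega
  rcases tree_dichotomy hT hab v with h | h
  · exact absurd (tree_unique_down hT hbc.symm hab h1 h) hca
  · omega

lemma TSide_disjoint {a b b' : α} (hT : T.IsTree) (hab : T.Adj a b) (hab' : T.Adj a b')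
    (hne : b ≠ b') : Disjoint (TSide T a b) (TSide T a b') := by
  rw [Set.disjoint_left]
  intro v hv hv'
  simp only [TSide, Set.mem_setOf_eq] at hv hv'
  have h1 : T.dist v b + 1 = T.dist v a := by
    rcases tree_dichotomy hT hab v with h | h <;> omega
  have h2 : T.dist v b' + 1 = T.dist v a := by
    rcases tree_dichotomy hT hab' v with h | h <;> omega
  exact hne (tree_unique_down hT hab.symm hab'.symm h1 h2)

lemma TSide_adj_closed {a b v w : α} (hT : T.IsTree) (hab : T.Adj a b)
    (hv : v ∈ TSide T a b) (hadj : T.Adj v w) (hw : w ≠ a) : w ∈ TSide T a b :=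
  side_closed hT hab hv hadj hw

end TSideL


section Sibs

variable {α : Type*} [DecidableEq α] {T : SimpleGraph α} (hT : T.IsTree)
  (L : α → Finset ℕ) (q : ℕ)

include hT in
theorem sibs (hcard : ∀ a, (L a).card ≤ q)
    (hcov : ∀ a, ∀ i ∈ L a, ∀ x < i, x ∈ L a ∨ ∃ b, T.Adj a b ∧ x ∈ L b) :
    ∀ t : ℕ, ∀ (a : α) (F E : Finset ℕ) (A : Set α) (j : ℕ),
    j ∈ L a →
    (∀ b x, T.Adj a b → x ∈ L b → x ∉ F → x ∉ E → TSide T a b ⊆ A) →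
    (1 ≤ t → (t-1)*q + ((L a) ∩ Finset.range j).card + (F ∩ Finset.range j).card
        + (E ∩ Finset.range j).card < j) →
    ∃ C : Fin t → Set α,
      (∀ i, (C i).Nonempty) ∧
      (∀ i, ∀ v ∈ C i, ∀ w ∈ C i, ¬ T.Adj v w) ∧
      (∀ i i', i ≠ i' → Disjoint (C i) (C i')) ∧
      (∀ i i' : Fin t, i' < i → ∀ v ∈ C i, ∃ w ∈ C i', T.Adj v w) ∧
      (∀ i, C i ⊆ A) ∧ (∀ i, a ∉ C i) ∧ (∀ i, ∃ w ∈ C i, T.Adj a w) := by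
  intro t
  induction t with
  | zero =>
    intro a F E A j hj hzone hbud
    exact ⟨Fin.elim0, fun i => i.elim0, fun i => i.elim0, fun i => i.elim0,
      fun i => i.elim0, fun i => i.elim0, fun i => i.elim0, fun i => i.elim0⟩
  | succ t' IH =>
    intro a F E A j hj hzone hbud
    classical
    have hbud' : t'*q + ((L a) ∩ Finset.range j).card + (F ∩ Finset.range j).card
        + (E ∩ Finset.range j).card < j := by simpa using hbud (by omega)
    -- the index function
    set idx : ℕ → ℕ := fun x => ((Finset.range x) \ L a).card with hidx
    have hidx_add : ∀ x, ((L a) ∩ Finset.range x).card + idx x = x := by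
      intro x
      have h := Finset.card_inter_add_card_sdiff (Finset.range x) (L a)
      rw [Finset.inter_comm] at h
      simpa [hidx] using h
    have hmono : ∀ x y, x < y → x ∉ L a → idx x < idx y := by
      intro x y hxy hxa
      have hsub : insert x (Finset.range x \ L a) ⊆ Finset.range y \ L a := by
        intro z hz
        rcases Finset.mem_insert.mp hz with rfl | hz
        · simp [Finset.mem_sdiff, Finset.mem_range, hxy, hxa]
        · rw [Finset.mem_sdiff, Finset.mem_range] at hz ⊢
          exact ⟨by omega, hz.2⟩
      have hcard' := Finset.card_le_card hsub
      rw [Finset.card_insert_of_notMem (by simp)] at hcard'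
      simpa [hidx] using hcard'
    -- counting
    set good0 : Finset ℕ := ((Finset.range j) \ L a).filter (fun x => t'*q ≤ idx x)
      with hgood0
    have hcount1 : (((Finset.range j) \ L a).filter (fun x => ¬ (t'*q ≤ idx x))).card
        ≤ t'*q := by
      have : (((Finset.range j) \ L a).filter (fun x => ¬ (t'*q ≤ idx x))).card
          ≤ (Finset.range (t'*q)).card := by
        apply Finset.card_le_card_of_injOn idx
        · intro x hx
          simp only [Finset.mem_coe, Finset.mem_filter] at hx
          simp only [Finset.mem_coe, Finset.mem_range]
          omega
        · intro x hx y hy hxy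
          simp only [Finset.mem_coe, Finset.mem_filter, Finset.mem_sdiff] at hx hy
          by_contra hne
          rcases Nat.lt_or_ge x y with h | h
          · exact absurd hxy (by have := hmono x y h hx.1.2; omega)
          · have : y < x := by omega
            exact absurd hxy (by have := hmono y x this hy.1.2; omega)
      simpa using this
    have hcount2 : j ≤ good0.card + t'*q + ((L a) ∩ Finset.range j).card := by
      have hsplit := Finset.card_filter_add_card_filter_not
        (s := (Finset.range j) \ L a) (p := fun x => t'*q ≤ idx x)
      have hj' := hidx_add j
      simp only [hidx] at hj'
      rw [← hgood0] at hsplit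
      omega
    -- exclude F and E
    have hFE : (good0 ∩ (F ∪ E)).card ≤ (F ∩ Finset.range j).card
        + (E ∩ Finset.range j).card := by
      have hsub : good0 ∩ (F ∪ E) ⊆ (F ∩ Finset.range j) ∪ (E ∩ Finset.range j) := by
        intro x hx
        simp only [Finset.mem_inter, Finset.mem_union, hgood0, Finset.mem_filter,
          Finset.mem_sdiff, Finset.mem_range] at hx ⊢
        rcases hx.2 with h | h
        · exact Or.inl ⟨h, hx.1.1.1⟩
        · exact Or.inr ⟨h, hx.1.1.1⟩
      calc (good0 ∩ (F ∪ E)).card ≤ _ := Finset.card_le_card hsub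
        _ ≤ _ := Finset.card_union_le _ _
    have hgoodcard : 0 < (good0 \ (F ∪ E)).card := by
      have := Finset.card_inter_add_card_sdiff good0 (F ∪ E)
      omega
    obtain ⟨x, hxmem⟩ := Finset.card_pos.mp hgoodcard
    rw [Finset.mem_sdiff, Finset.mem_union] at hxmem
    push_neg at hxmem
    have hxg := hxmem.1
    have hxF := hxmem.2.1
    have hxE := hxmem.2.2
    rw [hgood0, Finset.mem_filter, Finset.mem_sdiff, Finset.mem_range] at hxg
    obtain ⟨⟨hxj, hxa⟩, hxidx⟩ := hxg
    have hax : t'*q + ((L a) ∩ Finset.range x).card ≤ x := by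
      have := hidx_add x; omega
    -- find the child fiber
    rcases hcov a j hj x hxj with h | ⟨b, hab, hxb⟩
    · exact absurd h hxa
    have hmul : 1 ≤ t' → t'*q = (t'-1)*q + q := by
      intro h
      obtain ⟨t'', rfl⟩ : ∃ t'', t' = t''+1 := ⟨t'-1, by omega⟩
      simp [Nat.succ_mul]
    -- child call
    have hLbx : (L b ∩ Finset.range x).card + 1 ≤ q := by
      have hss : (L b ∩ Finset.range x) ⊂ L b := by
        refine Finset.ssubset_iff_of_subset Finset.inter_subset_left |>.mpr ?_
        exact ⟨x, hxb, by simp⟩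
      have := Finset.card_lt_card hss
      have := hcard b
      omega
    obtain ⟨Cb, hCbne, hCbst, hCbdisj, hCbwit, hCbA, hCbb, hCbadj⟩ :=
      IH b (L a) ∅ (TSide T a b) x hxb
        (by
          intro b' x' hbb' hx'b' hx'a _
          rcases eq_or_ne b' a with rfl | hne
          · exact absurd hx'b' hx'a
          · exact TSide_subset hT hab hbb' hne)
        (by
          intro ht'
          have := hmul ht'
          simp only [Finset.empty_inter, Finset.card_empty]
          omega)
    -- sibling call
    obtain ⟨D, hDne, hDst, hDdisj, hDwit, hDA, hDa, hDadj⟩ :=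
      IH a F (E ∪ L b) (A \ TSide T a b) j hj
        (by
          intro b' x' hab' hx'b' hx'F hx'EL
          rw [Finset.mem_union] at hx'EL
          push_neg at hx'EL
          have hne : b' ≠ b := fun h => hx'EL.2 (h ▸ hx'b')
          intro v hv
          refine ⟨hzone b' x' hab' hx'b' hx'F hx'EL.1 hv, fun hv' => ?_⟩
          exact (TSide_disjoint hT hab' hab hne).ne_of_mem hv hv' rfl)
        (by
          intro ht'
          have h1 := hmul ht'
          have h2 : ((E ∪ L b) ∩ Finset.range j).card ≤
              (E ∩ Finset.range j).card + q := by
            rw [Finset.union_inter_distrib_right]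
            calc _ ≤ _ := Finset.card_union_le _ _
              _ ≤ _ := by
                have : (L b ∩ Finset.range j).card ≤ (L b).card :=
                  Finset.card_le_card Finset.inter_subset_left
                have := hcard b
                omega
          omega)
    -- basic zone facts
    have hSideA : TSide T a b ⊆ A := hzone b x hab hxb hxF hxE
    have hbA : b ∈ TSide T a b := mem_TSide_self hT hab
    have haS : a ∉ TSide T a b := not_mem_TSide hT hab
    have hDS : ∀ m v, v ∈ D m → v ∉ TSide T a b := by
      intro m v hv hv'
      exact ((hDA m) hv).2 hv'
    -- cross stability
    have hcross : ∀ v w, v ∈ TSide T a b → w ∉ TSide T a b → w ≠ a → ¬ T.Adj v w := by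
      intro v w hv hw hwa hadj
      exact hw (TSide_adj_closed hT hab hv hadj hwa)
    -- assemble
    refine ⟨fun i => if h : (i:ℕ) < t' then D ⟨i,h⟩ ∪ Cb ⟨i,h⟩ else {b},
      ?_, ?_, ?_, ?_, ?_, ?_, ?_⟩
    · intro i
      by_cases hi : (i:ℕ) < t'
      · simp only [dif_pos hi]
        exact (hDne _).mono Set.subset_union_left
      · simp only [dif_neg hi]
        exact ⟨b, rfl⟩
    · intro i v hv w hw
      by_cases hi : (i:ℕ) < t'
      · simp only [dif_pos hi] at hv hw
        rcases hv with hv | hv <;> rcases hw with hw | hw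
        · exact hDst _ v hv w hw
        · intro hadj
          exact hcross w v (hCbA _ hw) (hDS _ v hv)
            (fun h => hDa _ (h ▸ hv)) hadj.symm
        · exact hcross v w (hCbA _ hv) (hDS _ w hw) (fun h => hDa _ (h ▸ hw))
        · exact hCbst _ v hv w hw
      · simp only [dif_neg hi] at hv hw
        have hv' : v = b := hv
        have hw' : w = b := hw
        rw [hv', hw']
        exact fun h => T.loopless.irrefl _ h
    · intro i i' hne
      by_cases hi : (i:ℕ) < t' <;> by_cases hi' : (i':ℕ) < t'
      · simp only [dif_pos hi, dif_pos hi']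
        have hmm : (⟨i,hi⟩ : Fin t') ≠ ⟨i',hi'⟩ := by
          intro h
          have hval : (i:ℕ) = (i':ℕ) := by simpa using h
          exact hne (Fin.ext hval)
        rw [Set.disjoint_union_left]
        constructor <;> rw [Set.disjoint_union_right]
        · exact ⟨hDdisj _ _ hmm, Set.disjoint_left.mpr
            (fun v hv hv' => (hDS _ v hv) (hCbA _ hv'))⟩
        · exact ⟨Set.disjoint_left.mpr
            (fun v hv hv' => (hDS _ v hv') (hCbA _ hv)), hCbdisj _ _ hmm⟩
      · simp only [dif_pos hi, dif_neg hi']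
        rw [Set.disjoint_singleton_right]
        rintro (h | h)
        · exact hDS _ b h hbA
        · exact hCbb _ h
      · simp only [dif_neg hi, dif_pos hi']
        rw [Set.disjoint_singleton_left]
        rintro (h | h)
        · exact hDS _ b h hbA
        · exact hCbb _ h
      · exact absurd (Fin.ext (by omega)) hne
    · intro i i' hlt v hv
      have hi'val : (i':ℕ) < (i:ℕ) := hlt
      by_cases hi : (i:ℕ) < t'
      · have hi' : (i':ℕ) < t' := by omega
        simp only [dif_pos hi] at hv
        simp only [dif_pos hi']
        have hmm : (⟨i',hi'⟩ : Fin t') < ⟨i,hi⟩ := Fin.mk_lt_mk.mpr (by omega)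
        rcases hv with hv | hv
        · obtain ⟨w, hw, hadj⟩ := hDwit _ _ hmm v hv
          exact ⟨w, Or.inl hw, hadj⟩
        · obtain ⟨w, hw, hadj⟩ := hCbwit _ _ hmm v hv
          exact ⟨w, Or.inr hw, hadj⟩
      · simp only [dif_neg hi] at hv
        have hv' : v = b := hv
        subst hv'
        have hi' : (i':ℕ) < t' := by have := i.isLt; omega
        simp only [dif_pos hi']
        obtain ⟨w, hw, hadj⟩ := hCbadj ⟨i', hi'⟩
        exact ⟨w, Or.inr hw, hadj⟩
    · intro i
      by_cases hi : (i:ℕ) < t'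
      · simp only [dif_pos hi]
        rintro v (hv | hv)
        · exact ((hDA _) hv).1
        · exact hSideA ((hCbA _) hv)
      · simp only [dif_neg hi]
        rintro v hv
        obtain rfl : v = b := hv
        exact hSideA hbA
    · intro i
      by_cases hi : (i:ℕ) < t'
      · simp only [dif_pos hi]
        rintro (hv | hv)
        · exact hDa _ hv
        · exact haS ((hCbA _) hv)
      · simp only [dif_neg hi]
        exact fun h => hab.ne h
    · intro i
      by_cases hi : (i:ℕ) < t'
      · simp only [dif_pos hi]
        obtain ⟨w, hw, hadj⟩ := hDadj ⟨i, hi⟩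
        exact ⟨w, Or.inl hw, hadj⟩
      · simp only [dif_neg hi]
        exact ⟨b, rfl, hab⟩

end Sibs


theorem lexProd_greedy {α β : Type*} (G : SimpleGraph α) (H : SimpleGraph β)
    {k₁ k₂ : ℕ} (S : Fin k₁ → Set α) (R : Fin k₂ → Set β)
    (hS : IsGreedyColoring G k₁ S) (hR : IsGreedyColoring H k₂ R) (hk₂ : 0 < k₂) :
    IsGreedyColoring (lexProd G H) (k₁*k₂)
      (fun e => {vx : α × β |
        vx.1 ∈ S ⟨e.val / k₂, Nat.div_lt_of_lt_mul (e.isLt.trans_eq (Nat.mul_comm _ _))⟩ ∧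
        vx.2 ∈ R ⟨e.val % k₂, Nat.mod_lt _ hk₂⟩}) := by
  obtain ⟨hS1, hS2, hS3, hS4⟩ := hS
  obtain ⟨hR1, hR2, hR3, hR4⟩ := hR
  have hdiv : ∀ e : Fin (k₁*k₂), e.val / k₂ < k₁ :=
    fun e => Nat.div_lt_of_lt_mul (e.isLt.trans_eq (Nat.mul_comm _ _))
  refine ⟨?_, ?_, ?_, ?_⟩
  · rintro ⟨a, x⟩
    obtain ⟨i, hi, hiu⟩ := hS1 a
    obtain ⟨jj, hjj, hju⟩ := hR1 x
    have hlt : (i:ℕ)*k₂ + (jj:ℕ) < k₁*k₂ := by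
      have h1 : (i:ℕ) + 1 ≤ k₁ := i.isLt
      have h2 : (jj:ℕ) < k₂ := jj.isLt
      calc (i:ℕ)*k₂ + (jj:ℕ) < ((i:ℕ)+1)*k₂ := by rw [add_mul, one_mul]; omega
        _ ≤ k₁*k₂ := Nat.mul_le_mul_right _ h1
    have hdval : ((i:ℕ)*k₂ + (jj:ℕ)) / k₂ = (i:ℕ) := by
      rw [Nat.mul_comm, Nat.mul_add_div hk₂, Nat.div_eq_of_lt jj.isLt, Nat.add_zero]
    have hmval : ((i:ℕ)*k₂ + (jj:ℕ)) % k₂ = (jj:ℕ) := by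
      rw [Nat.mul_comm, Nat.mul_add_mod]
      exact Nat.mod_eq_of_lt jj.isLt
    refine ⟨⟨(i:ℕ)*k₂ + (jj:ℕ), hlt⟩, ⟨?_, ?_⟩, ?_⟩
    · simp only [Set.mem_setOf_eq]
      have heq : (⟨((⟨(i:ℕ)*k₂ + (jj:ℕ), hlt⟩ : Fin (k₁*k₂)).val) / k₂, hdiv _⟩ : Fin k₁)
          = i := Fin.ext hdval
      rw [heq]
      exact hi
    · have heq : (⟨((⟨(i:ℕ)*k₂ + (jj:ℕ), hlt⟩ : Fin (k₁*k₂)).val) % k₂,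
          Nat.mod_lt _ hk₂⟩ : Fin k₂) = jj := Fin.ext hmval
      rw [heq]
      exact hjj
    · rintro e ⟨hea, hex⟩
      have h1 := hiu _ hea
      have h2 := hju _ hex
      have h1' : e.val / k₂ = (i:ℕ) := congrArg Fin.val h1
      have h2' : e.val % k₂ = (jj:ℕ) := congrArg Fin.val h2
      apply Fin.ext
      have h3 : k₂ * (e.val / k₂) + e.val % k₂ = e.val := Nat.div_add_mod _ _
      show e.val = (i:ℕ)*k₂ + (jj:ℕ)
      rw [← h3, h1', h2', Nat.mul_comm]
  · intro e
    obtain ⟨a, ha⟩ := hS2 ⟨e.val / k₂, hdiv e⟩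
    obtain ⟨x, hx⟩ := hR2 ⟨e.val % k₂, Nat.mod_lt _ hk₂⟩
    exact ⟨(a, x), ha, hx⟩
  · rintro e ⟨a,x⟩ ⟨ha, hx⟩ ⟨b,y⟩ ⟨hb, hy⟩ hadj
    rcases hadj with hTadj | ⟨heq, hH⟩
    · exact hS3 _ _ ha _ hb hTadj
    · exact hR3 _ _ hx _ hy hH
  · intro e e' hlt v hv
    obtain ⟨a, x⟩ := v
    obtain ⟨ha, hx⟩ := hv
    have hval : e'.val < e.val := hlt
    have h3 : k₂ * (e.val / k₂) + e.val % k₂ = e.val := Nat.div_add_mod _ _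
    have h3' : k₂ * (e'.val / k₂) + e'.val % k₂ = e'.val := Nat.div_add_mod _ _
    have hdle : e'.val / k₂ ≤ e.val / k₂ := Nat.div_le_div_right hval.le
    rcases Nat.lt_or_ge (e'.val / k₂) (e.val / k₂) with hcase | hcase
    · obtain ⟨b, hb, hadj⟩ := hS4 ⟨e.val / k₂, hdiv e⟩ ⟨e'.val / k₂, hdiv e'⟩
        (by rw [Fin.lt_def]; exact hcase) a ha
      obtain ⟨y, hy⟩ := hR2 ⟨e'.val % k₂, Nat.mod_lt _ hk₂⟩
      exact ⟨(b, y), ⟨hb, hy⟩, Or.inl hadj⟩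
    · have hdeq : e'.val / k₂ = e.val / k₂ := by omega
      have hmlt : e'.val % k₂ < e.val % k₂ := by
        rw [hdeq] at h3'
        omega
      obtain ⟨y, hy, hadj⟩ := hR4 ⟨e.val % k₂, Nat.mod_lt _ hk₂⟩ ⟨e'.val % k₂, Nat.mod_lt _ hk₂⟩
        (by rw [Fin.lt_def]; exact hmlt) x hx
      refine ⟨(a, y), ⟨?_, hy⟩, Or.inr ⟨rfl, hadj⟩⟩
      have heq : (⟨e'.val / k₂, hdiv e'⟩ : Fin k₁) = ⟨e.val / k₂, hdiv e⟩ := Fin.ext hdeq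
      rw [heq]
      exact ha

/-- If `T` is a finite nonempty tree and `H` a finite nonempty graph, then
`Γ(T[H]) = Γ(T) · Γ(H)`. -/
theorem grundy_lexProd_tree {α β : Type*} [Fintype α] [Fintype β]
    [Nonempty α] [Nonempty β]
    (T : SimpleGraph α) (hT : T.IsTree) (H : SimpleGraph β) :
    grundy (lexProd T H) = grundy T * grundy H := by
  classical
  apply le_antisymm
  · -- upper bound
    refine grundy_le _ (fun k S hS => ?_)
    rcases Nat.eq_zero_or_pos k with rfl | hk
    · exact Nat.zero_le _
    obtain ⟨hS1, hS2, hS3, hS4⟩ := hS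
    set q := grundy H with hq
    have hq1 : 0 < q := grundy_pos H
    set L : α → Finset ℕ := fun a => Finset.image Fin.val
      (Finset.univ.filter (fun i : Fin k => ∃ x, (a,x) ∈ S i)) with hL
    have hmemL : ∀ a m, m ∈ L a ↔ ∃ i : Fin k, (∃ x, (a,x) ∈ S i) ∧ (i:ℕ) = m := by
      intro a m
      simp [hL]
    have hLk : ∀ a, ∀ m ∈ L a, m < k := by
      intro a m hm
      obtain ⟨i, -, rfl⟩ := (hmemL a m).mp hm
      exact i.isLt
    -- disjointness along edges
    have hdisj : ∀ a b, T.Adj a b → ∀ m, m ∈ L a → m ∈ L b → False := by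
      intro a b hab m hma hmb
      obtain ⟨i, ⟨x, hx⟩, hival⟩ := (hmemL a m).mp hma
      obtain ⟨i', ⟨y, hy⟩, hi'val⟩ := (hmemL b m).mp hmb
      have : i = i' := Fin.ext (by omega)
      subst this
      exact hS3 i _ hx _ hy (Or.inl hab)
    -- cardinality of fibers
    have hcard : ∀ a, (L a).card ≤ q := by
      intro a
      set n := (L a).card with hn
      set σ := (L a).orderIsoOfFin hn.symm with hσ
      set R : Fin n → Set β := fun m =>
        {x | (a, x) ∈ S ⟨((σ m : ℕ)), hLk a _ (σ m).2⟩} with hR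
      have hmemR : ∀ m x, x ∈ R m ↔ (a, x) ∈ S ⟨((σ m : ℕ)), hLk a _ (σ m).2⟩ := by
        intro m x; rw [hR]; rfl
      have hgreedy : IsGreedyColoring H n R := by
        refine ⟨?_, ?_, ?_, ?_⟩
        · intro x
          obtain ⟨i, hi, hiu⟩ := hS1 (a, x)
          have hiL : (i:ℕ) ∈ L a := (hmemL a i).mpr ⟨i, ⟨x, hi⟩, rfl⟩
          refine ⟨σ.symm ⟨(i:ℕ), hiL⟩, ?_, ?_⟩
          · simp only [hmemR]
            rw [OrderIso.apply_symm_apply]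
            exact hi
          · intro m hm
            simp only [hmemR] at hm
            have := hiu _ hm
            have hvv : ((σ m : ℕ)) = (i:ℕ) := congrArg Fin.val this
            have : σ m = ⟨(i:ℕ), hiL⟩ := Subtype.ext hvv
            rw [← this, OrderIso.symm_apply_apply]
        · intro m
          have hmL : ((σ m : ℕ)) ∈ L a := (σ m).2
          obtain ⟨i, ⟨x, hx⟩, hival⟩ := (hmemL a _).mp hmL
          refine ⟨x, ?_⟩
          simp only [hmemR]
          have : (⟨((σ m : ℕ)), hLk a _ (σ m).2⟩ : Fin k) = i := Fin.ext hival.symm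
          rw [this]
          exact hx
        · intro m x hx y hy hadj
          simp only [hmemR] at hx hy
          exact hS3 _ _ hx _ hy (Or.inr ⟨rfl, hadj⟩)
        · intro m m' hlt x hx
          simp only [hmemR] at hx
          have hσlt : ((σ m' : ℕ)) < ((σ m : ℕ)) := by
            have : σ m' < σ m := σ.strictMono hlt
            exact this
          obtain ⟨⟨b, z⟩, hmem', hadj⟩ := hS4 _ ⟨((σ m' : ℕ)), hLk a _ (σ m').2⟩
            (by rw [Fin.lt_def]; exact hσlt) _ hx
          rcases hadj with hTadj | ⟨heq, hH⟩
          · exfalso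
            refine hdisj a b hTadj ((σ m' : ℕ)) (σ m').2 ?_
            exact (hmemL b _).mpr ⟨_, ⟨z, hmem'⟩, rfl⟩
          · refine ⟨z, ?_, hH⟩
            simp only [hmemR]
            have hba : b = a := heq.symm
            subst hba
            exact hmem'
      exact le_grundy_of_mem H hgreedy
    -- coverage
    have hcov : ∀ a, ∀ i ∈ L a, ∀ x < i, x ∈ L a ∨ ∃ b, T.Adj a b ∧ x ∈ L b := by
      intro a i hi x hxi
      obtain ⟨i₀, ⟨y, hy⟩, hival⟩ := (hmemL a i).mp hi
      have hxk : x < k := by have := i₀.isLt; omega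
      obtain ⟨⟨b, z⟩, hmem, hadj⟩ := hS4 i₀ ⟨x, hxk⟩ (by rw [Fin.lt_def]; simp; omega) _ hy
      rcases hadj with hTadj | ⟨heq, hH⟩
      · exact Or.inr ⟨b, hTadj, (hmemL b x).mpr ⟨⟨x, hxk⟩, ⟨z, hmem⟩, rfl⟩⟩
      · left
        have hba : b = a := heq.symm
        subst hba
        exact (hmemL b x).mpr ⟨⟨x, hxk⟩, ⟨z, hmem⟩, rfl⟩
    -- top fiber
    obtain ⟨⟨a₀, x₀⟩, htop⟩ := hS2 ⟨k-1, by omega⟩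
    have hk1L : k - 1 ∈ L a₀ := (hmemL a₀ (k-1)).mpr ⟨⟨k-1, by omega⟩, ⟨x₀, htop⟩, rfl⟩
    set t := (k-1)/q with ht
    have halpha : (L a₀ ∩ Finset.range (k-1)).card + 1 ≤ q := by
      have hss : (L a₀ ∩ Finset.range (k-1)) ⊂ L a₀ := by
        refine Finset.ssubset_iff_of_subset Finset.inter_subset_left |>.mpr ?_
        exact ⟨k-1, hk1L, by simp⟩
      have := Finset.card_lt_card hss
      have := hcard a₀
      omega
    have htq : t * q ≤ k - 1 := Nat.div_mul_le_self _ _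
    obtain ⟨C, hCne, hCst, hCdisj, hCwit, hCA, hCa, hCadj⟩ :=
      sibs hT L q hcard hcov t a₀ ∅ ∅ Set.univ (k-1) hk1L
        (fun _ _ _ _ _ _ => Set.subset_univ _)
        (by
          intro ht1
          have hmul : t*q = (t-1)*q + q := by
            obtain ⟨t'', ht''⟩ : ∃ t'', t = t''+1 := ⟨t-1, by omega⟩
            rw [ht'']
            simp [Nat.succ_mul]
          simp only [Finset.empty_inter, Finset.card_empty]
          omega)
    have hTbound : t + 1 ≤ grundy T := by
      refine partial_greedy_le_grundy T (t+1)
        (fun i => if h : (i:ℕ) < t then C ⟨i,h⟩ else {a₀}) ?_ ?_ ?_ ?_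
      · intro i
        by_cases hi : (i:ℕ) < t
        · simp only [dif_pos hi]; exact hCne _
        · simp only [dif_neg hi]; exact ⟨a₀, rfl⟩
      · intro i v hv w hw
        by_cases hi : (i:ℕ) < t
        · simp only [dif_pos hi] at hv hw
          exact hCst _ v hv w hw
        · simp only [dif_neg hi] at hv hw
          have hv' : v = a₀ := hv
          have hw' : w = a₀ := hw
          rw [hv', hw']
          exact fun h => T.loopless.irrefl _ h
      · intro i i' hne
        by_cases hi : (i:ℕ) < t <;> by_cases hi' : (i':ℕ) < t
        · simp only [dif_pos hi, dif_pos hi']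
          refine hCdisj _ _ ?_
          intro h
          have hval : (i:ℕ) = (i':ℕ) := by simpa using h
          exact hne (Fin.ext hval)
        · simp only [dif_pos hi, dif_neg hi']
          rw [Set.disjoint_singleton_right]
          exact hCa _
        · simp only [dif_neg hi, dif_pos hi']
          rw [Set.disjoint_singleton_left]
          exact hCa _
        · exact absurd (Fin.ext (by omega)) hne
      · intro i i' hlt v hv
        have hi'val : (i':ℕ) < (i:ℕ) := hlt
        by_cases hi : (i:ℕ) < t
        · have hi' : (i':ℕ) < t := by omega
          simp only [dif_pos hi] at hv
          simp only [dif_pos hi']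
          exact hCwit _ _ (Fin.mk_lt_mk.mpr (by omega)) v hv
        · simp only [dif_neg hi] at hv
          have hv' : v = a₀ := hv
          subst hv'
          have hi' : (i':ℕ) < t := by have := i.isLt; omega
          simp only [dif_pos hi']
          exact hCadj ⟨i', hi'⟩
    -- arithmetic
    have e1 : q * t + (k-1) % q = k - 1 := Nat.div_add_mod _ _
    have e2 : (k-1) % q < q := Nat.mod_lt _ hq1
    calc k ≤ (t+1) * q := by
          rw [add_mul, one_mul]
          have : t * q = q * t := Nat.mul_comm _ _
          omega
      _ ≤ grundy T * q := Nat.mul_le_mul_right _ hTbound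
  · -- lower bound
    obtain ⟨ST, hST⟩ := grundy_mem T
    obtain ⟨RH, hRH⟩ := grundy_mem H
    exact le_grundy_of_mem (lexProd T H)
      (lexProd_greedy T H ST RH hST hRH (grundy_pos H))
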